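/- Let R be a commutative ring in which 2 and 3 are invertible, and let L be a 3-graded Lie algebra over R, i.e., a ℤ-graded Lie algebra with L_i = 0 for |i| > 1. Then every x ∈ L_1 ∪ L_{−1} is algebraic: the R-linear endomorphism ∑_{i=0}^{4} (1/i!)(ad x)^i = id + ad x + (1/2)(ad x)^2 of L (note (ad x)^3 = 0) is an automorphism of L as an R-Lie algebra. -/

import Mathlib

/-- In a 3-graded Lie algebra over a commutative ring in which 2 and 3 are
invertible, every element of L_1 ∪ L_{-1} is algebraic: ∑_{i=0}^{4} (1/i!)(ad x)^i is
an automorphism of L as an R-Lie algebra. -/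
theorem statement6
    (R : Type*) [CommRing R]
    (h2 : IsUnit (2 : R)) (h3 : IsUnit (3 : R))
    (L : Type*) [LieRing L] [LieAlgebra R L]
    (Lc : ℤ → Submodule R L)
    (hdirect : DirectSum.IsInternal Lc)
    (hbracket : ∀ i j : ℤ, ∀ x ∈ Lc i, ∀ y ∈ Lc j, ⁅x, y⁆ ∈ Lc (i + j))
    (hbound : ∀ i : ℤ, 1 < |i| → Lc i = ⊥) :
    ∀ x : L, x ∈ Lc 1 ∨ x ∈ Lc (-1) →
      ∃ f : L ≃ₗ⁅R⁆ L, ∀ a : L,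
        f a = (∑ i ∈ Finset.range 5,
          Ring.inverse ((i.factorial : R)) • (LieAlgebra.ad R L x) ^ i) a := by
  intro x hx
  set D : Module.End R L := LieAlgebra.ad R L x with hDdef
  set c : R := Ring.inverse (2 : R) with hcdef
  have hc : c * 2 = 1 := Ring.inverse_mul_cancel _ h2
  obtain ⟨ε, hε, hxε⟩ : ∃ ε : ℤ, (ε = 1 ∨ ε = -1) ∧ x ∈ Lc ε := by
    rcases hx with h | h
    · exact ⟨1, Or.inl rfl, h⟩
    · exact ⟨-1, Or.inr rfl, h⟩
  have hDmem : ∀ j : ℤ, ∀ b ∈ Lc j, D b ∈ Lc (ε + j) := by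
    intro j b hb
    simpa [hDdef, LieAlgebra.ad_apply] using hbracket ε j x hxε b hb
  -- (ad x)^3 = 0
  have hD3 : ∀ a : L, D (D (D a)) = 0 := by
    intro a
    have ha : a ∈ ⨆ i, Lc i := by
      rw [hdirect.submodule_iSup_eq_top]; trivial
    refine Submodule.iSup_induction (motive := fun y => D (D (D y)) = 0) Lc ha ?_ ?_ ?_
    · intro i b hb
      by_cases hi : 1 < |i|
      · have hb0 : b = 0 := by
          rw [hbound i hi] at hb; simpa using hb
        simp [hb0]
      · have hmem : D (D (D b)) ∈ Lc (ε + (ε + (ε + i))) :=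
          hDmem _ _ (hDmem _ _ (hDmem _ _ hb))
        have hiabs : -1 ≤ i ∧ i ≤ 1 := abs_le.mp (not_lt.mp hi)
        have hbig : 1 < |ε + (ε + (ε + i))| := by
          rcases hε with rfl | rfl
          · have h2le : (2 : ℤ) ≤ 1 + (1 + (1 + i)) := by omega
            exact lt_of_lt_of_le (by omega) (le_trans h2le (le_abs_self _))
          · have h2le : (2 : ℤ) ≤ -(-1 + (-1 + (-1 + i))) := by omega
            exact lt_of_lt_of_le (by omega) (le_trans h2le (neg_le_abs _))
        rw [hbound _ hbig] at hmem
        simpa using hmem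
    · simp
    · intro u v hu hv
      simp [map_add, hu, hv]
  have leib : ∀ a b : L, D ⁅a, b⁆ = ⁅D a, b⁆ + ⁅a, D b⁆ := by
    intro a b
    show ⁅x, ⁅a, b⁆⁆ = ⁅⁅x, a⁆, b⁆ + ⁅a, ⁅x, b⁆⁆
    exact leibniz_lie x a b
  -- key identities
  have key3 : ∀ a b : L, ⁅D (D a), D b⁆ + ⁅D a, D (D b)⁆ = 0 := by
    intro a b
    have h0 : D (D (D ⁅a, b⁆)) = 0 := hD3 _
    simp only [leib, map_add] at h0
    rw [hD3 a, hD3 b] at h0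
    simp only [zero_lie, lie_zero, zero_add, add_zero] at h0
    have h3X : (3 : R) • (⁅D (D a), D b⁆ + ⁅D a, D (D b)⁆) = 0 := by
      rw [show (3 : R) = 1 + 1 + 1 by norm_num, add_smul, add_smul, one_smul]
      linear_combination (norm := abel) h0
    have := congrArg (fun y => Ring.inverse (3 : R) • y) h3X
    simpa [smul_smul, Ring.inverse_mul_cancel _ h3] using this
  have key4 : ∀ a b : L, ⁅D (D a), D (D b)⁆ = 0 := by
    intro a b
    have h := key3 a (D b)
    rw [hD3 b] at h
    simpa using h
  -- the maps
  set F : Module.End R L := 1 + D + c • (D * D) with hFdef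
  set G : Module.End R L := 1 - D + c • (D * D) with hGdef
  have hFa : ∀ a : L, F a = a + D a + c • D (D a) := by
    intro a
    simp [hFdef, LinearMap.add_apply, LinearMap.smul_apply, Module.End.mul_apply]
  have hGa : ∀ a : L, G a = a - D a + c • D (D a) := by
    intro a
    simp [hGdef, LinearMap.add_apply, LinearMap.sub_apply, LinearMap.smul_apply,
      Module.End.mul_apply]
  have hFG : ∀ a : L, F (G a) = a := by
    intro a
    rw [hFa, hGa]
    simp only [map_add, map_sub, map_smul, hD3, smul_zero, add_zero, sub_zero, zero_add,
      map_zero, zero_sub, sub_zero]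
    match_scalars <;> first | ring1 | linear_combination hc
  have hGF : ∀ a : L, G (F a) = a := by
    intro a
    rw [hGa, hFa]
    simp only [map_add, map_sub, map_smul, hD3, smul_zero, add_zero, sub_zero, zero_add,
      map_zero, zero_sub, sub_zero]
    match_scalars <;> first | ring1 | linear_combination hc
  have hbr : ∀ a b : L, F ⁅a, b⁆ = ⁅F a, F b⁆ := by
    intro a b
    rw [hFa ⁅a, b⁆, hFa a, hFa b]
    have hk3 : ⁅D (D a), D b⁆ = -⁅D a, D (D b)⁆ :=
      eq_neg_of_add_eq_zero_left (key3 a b)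
    simp only [leib, map_add, add_lie, lie_add, smul_lie, lie_smul, hk3, key4, smul_zero,
      smul_neg, smul_smul, add_zero]
    match_scalars <;> first | ring1 | linear_combination hc
  refine ⟨{ toLinearMap := F, map_lie' := by intro a b; exact hbr a b,
            invFun := G, left_inv := hGF, right_inv := hFG }, ?_⟩
  intro a
  have hsum : (∑ i ∈ Finset.range 5,
      Ring.inverse ((i.factorial : R)) • (LieAlgebra.ad R L x) ^ i) a
      = a + D a + c • D (D a) := by
    rw [Finset.sum_range_succ, Finset.sum_range_succ, Finset.sum_range_succ,
      Finset.sum_range_succ, Finset.sum_range_succ, Finset.sum_range_zero]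
    simp only [← hDdef, pow_succ, pow_zero, one_mul, LinearMap.add_apply, zero_add,
      LinearMap.smul_apply, Module.End.mul_apply, Module.End.one_apply]
    rw [hD3 a]
    simp [Nat.factorial, hcdef, map_zero]
  rw [hsum, ← hFa]
  rfl
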